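/- Let Φ : ℝ → ℝ be twice continuously differentiable and satisfy Φ''(τ) + √(24π)·√(Φ'(τ)² + Φ(τ)²)·Φ'(τ) + Φ(τ) = 0 for all τ. Then Φ(τ) → 0 and Φ'(τ) → 0 as τ → +∞; consequently the normalized Hubble constant h(τ) = √(8π/3)·√(Φ'(τ)² + Φ(τ)²) tends to 0 as τ → +∞. -/

import Mathlib

open Real Filter

set_option maxHeartbeats 1600000

/-- Every solution of the rescaled Einstein–Klein–Gordon system winds toward the
center `(0,0)`: `Φ → 0`, `Φ' → 0`, hence the Hubble constant `h → 0` as `τ → +∞`. -/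
theorem solution_tends_to_center
    (Φ : ℝ → ℝ) (hΦ : ContDiff ℝ 2 Φ)
    (heq : ∀ τ : ℝ, deriv (deriv Φ) τ
      + Real.sqrt (24 * Real.pi) * Real.sqrt ((deriv Φ τ) ^ 2 + (Φ τ) ^ 2) * deriv Φ τ
      + Φ τ = 0) :
    Tendsto Φ atTop (nhds 0) ∧
    Tendsto (deriv Φ) atTop (nhds 0) ∧
    Tendsto (fun τ => Real.sqrt (8 * Real.pi / 3)
      * Real.sqrt ((deriv Φ τ) ^ 2 + (Φ τ) ^ 2)) atTop (nhds 0) := by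
  set c := Real.sqrt (24 * Real.pi) with hc_def
  have hc : 0 < c := Real.sqrt_pos.mpr (by positivity)
  set E : ℝ → ℝ := fun τ => (deriv Φ τ) ^ 2 + (Φ τ) ^ 2 with hE_def
  have hE_nonneg : ∀ τ, 0 ≤ E τ := fun τ => by positivity
  -- differentiability
  have hΦ1 : Differentiable ℝ Φ := hΦ.differentiable (by norm_num)
  have hy : ContDiff ℝ 1 (deriv Φ) := by
    have h2 : ContDiff ℝ ((1 : ℕ) + 1) Φ := by exact_mod_cast hΦ
    exact (contDiff_succ_iff_deriv.mp h2).2.2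
  have hy1 : Differentiable ℝ (deriv Φ) := hy.differentiable (by norm_num)
  have hxd : ∀ τ, HasDerivAt Φ (deriv Φ τ) τ := fun τ => (hΦ1 τ).hasDerivAt
  have hyd : ∀ τ, HasDerivAt (deriv Φ) (deriv (deriv Φ) τ) τ := fun τ => (hy1 τ).hasDerivAt
  have hdd : ∀ τ, deriv (deriv Φ) τ = -(c * Real.sqrt (E τ) * deriv Φ τ) - Φ τ := by
    intro τ
    have := heq τ
    simp only [hE_def]
    linarith
  -- derivative of E
  have hEd : ∀ τ, HasDerivAt E (-(2 * c * Real.sqrt (E τ)) * (deriv Φ τ) ^ 2) τ := by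
    intro τ
    have h1 : HasDerivAt E _ τ := (((hyd τ).pow 2).add ((hxd τ).pow 2))
    convert h1 using 1
    rw [hdd τ]
    simp only [Nat.cast_ofNat, Nat.reduceSub, pow_one]
    ring
  have hE_anti : Antitone E := by
    apply antitone_of_deriv_nonpos (fun τ => (hEd τ).differentiableAt)
    intro τ
    rw [(hEd τ).deriv]
    have : 0 ≤ 2 * c * Real.sqrt (E τ) * (deriv Φ τ) ^ 2 := by positivity
    linarith
  -- limit of E
  have hbdd : BddBelow (Set.range E) := ⟨0, by rintro x ⟨τ, rfl⟩; exact hE_nonneg τ⟩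
  set L := ⨅ τ, E τ with hL_def
  have hEL : Tendsto E atTop (nhds L) := tendsto_atTop_ciInf hE_anti hbdd
  have hL_nonneg : 0 ≤ L := le_ciInf fun τ => hE_nonneg τ
  have hLle : ∀ τ, L ≤ E τ := fun τ => ciInf_le hbdd τ
  have hL0 : L = 0 := by
    by_contra h
    have hL : 0 < L := lt_of_le_of_ne hL_nonneg (Ne.symm h)
    set s := Real.sqrt L with hs_def
    have hs : 0 < s := Real.sqrt_pos.mpr hL
    set M := Real.sqrt (E 0) with hM_def
    have hM0 : 0 ≤ M := Real.sqrt_nonneg _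
    have hD : (0:ℝ) < 1 + c ^ 2 * M ^ 2 / 2 := by positivity
    obtain ⟨ε, hε, hε1, hεb⟩ : ∃ ε : ℝ, 0 < ε ∧ ε ≤ 1 ∧
        ε * (1 + c ^ 2 * M ^ 2 / 2) ≤ c * s / 2 := by
      refine ⟨min 1 ((c * s / 2) / (1 + c ^ 2 * M ^ 2 / 2)),
        lt_min one_pos (by positivity), min_le_left _ _, ?_⟩
      have h1 : min 1 ((c * s / 2) / (1 + c ^ 2 * M ^ 2 / 2))
          ≤ (c * s / 2) / (1 + c ^ 2 * M ^ 2 / 2) := min_le_right _ _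
      calc min 1 ((c * s / 2) / (1 + c ^ 2 * M ^ 2 / 2)) * (1 + c ^ 2 * M ^ 2 / 2)
          ≤ ((c * s / 2) / (1 + c ^ 2 * M ^ 2 / 2)) * (1 + c ^ 2 * M ^ 2 / 2) :=
            mul_le_mul_of_nonneg_right h1 hD.le
        _ = c * s / 2 := div_mul_cancel₀ _ hD.ne'
    obtain ⟨δ, hδ, hδ1, hδ2⟩ : ∃ δ : ℝ, 0 < δ ∧ δ ≤ ε / 2 ∧ δ ≤ c * s / 2 :=
      ⟨min (ε / 2) (c * s / 2), lt_min (by linarith) (by positivity),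
        min_le_left _ _, min_le_right _ _⟩
    -- Lyapunov function
    set V : ℝ → ℝ := fun τ => E τ + ε * (Φ τ * deriv Φ τ) with hV_def
    have hVd : ∀ τ, HasDerivAt V
        (-(2 * c * Real.sqrt (E τ)) * (deriv Φ τ) ^ 2
          + ε * (deriv Φ τ * deriv Φ τ + Φ τ * deriv (deriv Φ) τ)) τ := by
      intro τ
      exact (hEd τ).add (((hxd τ).mul (hyd τ)).const_mul ε)
    have hV_nonneg : ∀ τ, 0 ≤ V τ := by
      intro τ
      have h1 : 0 ≤ ε * (Φ τ + deriv Φ τ) ^ 2 := by positivity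
      have h2 : 0 ≤ (1 - ε / 2) * ((Φ τ) ^ 2 + (deriv Φ τ) ^ 2) := by
        apply mul_nonneg (by linarith) (by positivity)
      simp only [hV_def, hE_def]
      nlinarith [sq_nonneg (Φ τ), sq_nonneg (deriv Φ τ)]
    -- g is antitone on [0, ∞)
    set g : ℝ → ℝ := fun τ => V τ + δ * L * τ with hg_def
    have hgd : ∀ τ, HasDerivAt g
        (-(2 * c * Real.sqrt (E τ)) * (deriv Φ τ) ^ 2
          + ε * (deriv Φ τ * deriv Φ τ + Φ τ * deriv (deriv Φ) τ) + δ * L * 1) τ := by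
      intro τ
      exact (hVd τ).add ((hasDerivAt_id τ).const_mul (δ * L))
    have hg_anti : AntitoneOn g (Set.Ici (0:ℝ)) := by
      apply antitoneOn_of_deriv_nonpos (convex_Ici 0)
      · exact fun τ _ => ((hgd τ).differentiableAt).continuousAt.continuousWithinAt
      · exact fun τ _ => ((hgd τ).differentiableAt).differentiableWithinAt
      · intro τ hτ
        rw [interior_Ici] at hτ
        rw [(hgd τ).deriv, hdd τ]
        set q := Real.sqrt (E τ) with hq_def
        set x := Φ τ
        set y := deriv Φ τ
        have hq0 : 0 ≤ q := Real.sqrt_nonneg _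
        have hq2 : q ^ 2 = y ^ 2 + x ^ 2 := Real.sq_sqrt (hE_nonneg τ)
        have hqs : s ≤ q := Real.sqrt_le_sqrt (hLle τ)
        have hqM : q ≤ M := Real.sqrt_le_sqrt (hE_anti hτ.le)
        have hqM2 : q ^ 2 ≤ M ^ 2 := pow_le_pow_left₀ hq0 hqM 2
        have hA : ε + δ + ε * c ^ 2 * q ^ 2 / 2 ≤ 2 * c * q := by
          have h1 : ε * c ^ 2 / 2 * q ^ 2 ≤ ε * c ^ 2 / 2 * M ^ 2 :=
            mul_le_mul_of_nonneg_left hqM2 (by positivity)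
          have h2 : c * s ≤ c * q := mul_le_mul_of_nonneg_left hqs hc.le
          have h3 : 0 ≤ c * q := mul_nonneg hc.le hq0
          linarith [hεb, hδ2]
        have hLq : L ≤ q ^ 2 := by rw [hq2]; exact hLle τ
        have hδL : δ * L ≤ δ * q ^ 2 := mul_le_mul_of_nonneg_left hLq hδ.le
        have key1 : 0 ≤ (2 * c * q - ε - δ - ε * c ^ 2 * q ^ 2 / 2) * y ^ 2 := by
          apply mul_nonneg (by linarith) (sq_nonneg _)
        have key2 : 0 ≤ (ε - δ - ε / 2) * x ^ 2 := by
          apply mul_nonneg (by linarith) (sq_nonneg _)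
        have key3 : 0 ≤ ε / 2 * (c * q * y + x) ^ 2 := by positivity
        nlinarith [key1, key2, key3, hδL]
    -- contradiction
    have hδL0 : 0 < δ * L := mul_pos hδ hL
    set T := (V 0 + 1) / (δ * L) with hT_def
    have hT0 : 0 ≤ T := div_nonneg (by linarith [hV_nonneg 0]) hδL0.le
    have hgT : g T ≤ g 0 := hg_anti (Set.self_mem_Ici) hT0 hT0
    have hgTval : g T = V T + (V 0 + 1) := by
      simp only [hg_def, hT_def]
      rw [mul_div_cancel₀ _ hδL0.ne']
    have hg0 : g 0 = V 0 := by simp [hg_def]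
    have := hV_nonneg T
    rw [hgTval, hg0] at hgT
    linarith
  rw [hL0] at hEL
  -- conclude
  have hΦsq : Tendsto (fun τ => (Φ τ) ^ 2) atTop (nhds 0) :=
    squeeze_zero (fun τ => sq_nonneg _) (fun τ => by simp only [hE_def]; nlinarith [sq_nonneg (deriv Φ τ)]) hEL
  have hysq : Tendsto (fun τ => (deriv Φ τ) ^ 2) atTop (nhds 0) :=
    squeeze_zero (fun τ => sq_nonneg _) (fun τ => by simp only [hE_def]; nlinarith [sq_nonneg (Φ τ)]) hEL
  have habs : ∀ f : ℝ → ℝ, Tendsto (fun τ => (f τ) ^ 2) atTop (nhds 0) → Tendsto f atTop (nhds 0) := by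
    intro f hf
    have h1 : Tendsto (fun τ => Real.sqrt ((f τ) ^ 2)) atTop (nhds (Real.sqrt 0)) := hf.sqrt
    rw [Real.sqrt_zero] at h1
    simp only [Real.sqrt_sq_eq_abs] at h1
    exact tendsto_zero_iff_abs_tendsto_zero f |>.mpr h1
  refine ⟨habs Φ hΦsq, habs (deriv Φ) hysq, ?_⟩
  have h1 : Tendsto (fun τ => Real.sqrt (E τ)) atTop (nhds (Real.sqrt 0)) := hEL.sqrt
  rw [Real.sqrt_zero] at h1
  have h2 := h1.const_mul (Real.sqrt (8 * Real.pi / 3))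
  rw [mul_zero] at h2
  exact h2
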